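/- Let F(θ,x) = (θ + ω, f(θ,x)) be a quasiperiodic skew product of Ω = S¹ × I with ω irrational, and let PC be a pseudo-curve with F(PC) ⊆ PC. If PC contains an arc of a curve, that is, there exist a nonempty open arc U ⊆ S¹ and a continuous map ξ : U → I whose graph is contained in PC, then PC is a curve: PC is the graph of a continuous map S¹ → I. -/

import Mathlib

open Set

/-- The graph of `φ` over `G`. -/
def graphOn (G : Set UnitAddCircle) (φ : UnitAddCircle → ℝ) : Set (UnitAddCircle × ℝ) :=
  (fun θ => (θ, φ θ)) '' G

/-- The quasiperiodic skew product `F(θ,x) = (θ + ω, f θ x)`. -/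
noncomputable def skewProd (ω : ℝ) (f : UnitAddCircle → ℝ → ℝ) :
    UnitAddCircle × ℝ → UnitAddCircle × ℝ :=
  fun p => (p.1 + (ω : UnitAddCircle), f p.1 p.2)

open Filter Topology

/-- The natural multiples of an irrational point are dense in the circle. -/
lemma aux_dense_nsmul (α : ℝ) (hα : Irrational α) :
    DenseRange (fun n : ℕ => n • (α : UnitAddCircle)) := by
  rw [← denseRange_zsmul_iff_nsmul]
  set S : AddSubgroup ℝ := AddSubgroup.closure {1, α} with hSdef
  have h1 : (1 : ℝ) ∈ S := AddSubgroup.subset_closure (by simp)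
  have hαS : α ∈ S := AddSubgroup.subset_closure (by simp)
  have hdS : Dense (S : Set ℝ) := by
    rcases S.dense_or_cyclic with h | ⟨c, hc⟩
    · exact h
    · exfalso
      rw [hc] at h1 hαS
      obtain ⟨n, hn⟩ := AddSubgroup.mem_closure_singleton.mp h1
      obtain ⟨m, hm⟩ := AddSubgroup.mem_closure_singleton.mp hαS
      have hn0 : n ≠ 0 := by
        rintro rfl
        simp at hn
      have key : (n : ℝ) * α = m := by
        have h2 : n • α = m • (n • c) := by rw [← hm, smul_comm]
        rw [hn] at h2
        push_cast [zsmul_eq_mul] at h2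
        linarith
      have hnR : (n : ℝ) ≠ 0 := Int.cast_ne_zero.mpr hn0
      refine hα ⟨(m : ℚ) / (n : ℚ), ?_⟩
      push_cast
      field_simp
      linarith
  -- every element of S maps into the cyclic group generated by `↑α` on the circle
  have hmem : ∀ x ∈ S, ∃ k : ℤ, k • ((α : ℝ) : UnitAddCircle) = ((x : ℝ) : UnitAddCircle) := by
    intro x hx
    rw [hSdef] at hx
    refine AddSubgroup.closure_induction ?_ ?_ ?_ ?_ hx
    · rintro y (rfl | rfl)
      · exact ⟨0, by rw [zero_zsmul, AddCircle.coe_period]⟩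
      · exact ⟨1, by rw [one_zsmul]⟩
    · exact ⟨0, by rw [zero_zsmul]; rfl⟩
    · rintro y z - - ⟨k1, hk1⟩ ⟨k2, hk2⟩
      exact ⟨k1 + k2, by rw [add_zsmul, hk1, hk2]; rfl⟩
    · rintro y - ⟨k, hk⟩
      exact ⟨-k, by rw [neg_zsmul, hk]; rfl⟩
  have hcont : Continuous (fun x : ℝ => (x : UnitAddCircle)) := continuous_quotient_mk'
  have hsur : Function.Surjective (fun x : ℝ => (x : UnitAddCircle)) :=
    QuotientAddGroup.mk_surjective
  have himg : Dense ((fun x : ℝ => (x : UnitAddCircle)) '' (S : Set ℝ)) :=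
    hsur.denseRange.dense_image hcont hdS
  refine himg.mono ?_
  rintro _ ⟨x, hx, rfl⟩
  exact hmem x hx

/-- If an invariant pseudo-curve of a quasiperiodic skew product
contains an arc of a curve (the graph of a continuous map on a nonempty open arc of
`S¹`), then it is a curve: the graph of a continuous map `S¹ → I`. -/
theorem statement7 (a b : ℝ) (hab : a ≤ b) (ω : ℝ) (hω : Irrational ω)
    (f : UnitAddCircle → ℝ → ℝ)
    (hf : ContinuousOn (fun p : UnitAddCircle × ℝ => f p.1 p.2) (univ ×ˢ Icc a b))
    (hmaps : ∀ θ, ∀ x ∈ Icc a b, f θ x ∈ Icc a b)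
    (G : Set UnitAddCircle) (hG : G ∈ residual UnitAddCircle)
    (φ : UnitAddCircle → ℝ) (hφc : ContinuousOn φ G) (hφI : ∀ θ ∈ G, φ θ ∈ Icc a b)
    (hinv : skewProd ω f '' closure (graphOn G φ) ⊆ closure (graphOn G φ))
    (harc : ∃ (U : Set UnitAddCircle) (ξ : UnitAddCircle → ℝ),
      IsOpen U ∧ U.Nonempty ∧ IsPreconnected U ∧ ContinuousOn ξ U ∧
      (∀ θ ∈ U, ξ θ ∈ Icc a b) ∧ graphOn U ξ ⊆ closure (graphOn G φ)) :
    ∃ ψ : UnitAddCircle → ℝ, Continuous ψ ∧ (∀ θ, ψ θ ∈ Icc a b) ∧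
      closure (graphOn G φ) = Set.range fun θ => (θ, ψ θ) := by
  classical
  obtain ⟨U, ξ, hUopen, hUne, -, hξc, hξI, hξPC⟩ := harc
  set ωc : UnitAddCircle := (ω : UnitAddCircle) with hωc
  set PC : Set (UnitAddCircle × ℝ) := closure (graphOn G φ) with hPCdef
  -- PC lies inside the band
  have hPCsub : PC ⊆ univ ×ˢ Icc a b := by
    apply closure_minimal _ (isClosed_univ.prod isClosed_Icc)
    rintro _ ⟨θ, hθ, rfl⟩
    exact ⟨trivial, hφI θ hθ⟩
  -- fibers over points of G are singletons
  have hGfib : ∀ θ ∈ G, ∀ x : ℝ, (θ, x) ∈ PC → x = φ θ := by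
    intro θ hθ x hx
    obtain ⟨u, hu, hlim⟩ := mem_closure_iff_seq_limit.mp hx
    simp only [_root_.graphOn, Set.mem_image] at hu
    choose g hgG hgu using hu
    have h1 : Tendsto (fun n => (g n, φ (g n))) atTop (𝓝 (θ, x)) :=
      hlim.congr fun n => (hgu n).symm
    have hfst : Tendsto g atTop (𝓝 θ) := by
      exact (continuous_fst.tendsto (θ, x)).comp h1
    have hsnd : Tendsto (fun n => φ (g n)) atTop (𝓝 x) := by
      exact (continuous_snd.tendsto (θ, x)).comp h1
    have hgG' : Tendsto g atTop (𝓝[G] θ) :=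
      tendsto_nhdsWithin_iff.mpr ⟨hfst, Eventually.of_forall hgG⟩
    exact tendsto_nhds_unique hsnd (Filter.Tendsto.comp (hφc θ hθ) hgG')
  -- uniqueness of the fiber over any arc contained in PC
  have harcUniq : ∀ (V : Set UnitAddCircle) (η : UnitAddCircle → ℝ), IsOpen V →
      ContinuousOn η V → (∀ θ ∈ V, (θ, η θ) ∈ PC) →
      ∀ θ ∈ V, ∀ x : ℝ, (θ, x) ∈ PC → x = η θ := by
    intro V η hVopen hηc hηPC θ hθ x hx
    obtain ⟨u, hu, hlim⟩ := mem_closure_iff_seq_limit.mp hx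
    simp only [_root_.graphOn, Set.mem_image] at hu
    choose g hgG hgu using hu
    have h1 : Tendsto (fun n => (g n, φ (g n))) atTop (𝓝 (θ, x)) :=
      hlim.congr fun n => (hgu n).symm
    have hfst : Tendsto g atTop (𝓝 θ) := by
      exact (continuous_fst.tendsto (θ, x)).comp h1
    have hsnd : Tendsto (fun n => φ (g n)) atTop (𝓝 x) := by
      exact (continuous_snd.tendsto (θ, x)).comp h1
    have hev : ∀ᶠ n in atTop, g n ∈ V := hfst (hVopen.mem_nhds hθ)
    have heq : (fun n => φ (g n)) =ᶠ[atTop] fun n => η (g n) := by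
      filter_upwards [hev] with n hn
      exact (hGfib (g n) (hgG n) (η (g n)) (hηPC _ hn)).symm
    have hgV : Tendsto g atTop (𝓝[V] θ) := tendsto_nhdsWithin_iff.mpr ⟨hfst, hev⟩
    have h2 : Tendsto (fun n => η (g n)) atTop (𝓝 (η θ)) := Filter.Tendsto.comp (hηc θ hθ) hgV
    exact tendsto_nhds_unique (hsnd.congr' heq) h2
  -- the iterated arcs
  have hiter : ∀ n : ℕ, ∃ η : UnitAddCircle → ℝ,
      ContinuousOn η {θ | θ - n • ωc ∈ U} ∧
      ∀ θ : UnitAddCircle, θ - n • ωc ∈ U → (θ, η θ) ∈ PC := by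
    intro n
    induction n with
    | zero =>
      refine ⟨ξ, ?_, ?_⟩
      · simpa using hξc
      · intro θ hθ
        simp only [zero_smul, sub_zero] at hθ
        exact hξPC ⟨θ, hθ, rfl⟩
    | succ n ih =>
      obtain ⟨η, hηc, hηPC⟩ := ih
      refine ⟨fun θ => f (θ - ωc) (η (θ - ωc)), ?_, ?_⟩
      · have hVeq : ∀ θ : UnitAddCircle, θ - (n + 1 : ℕ) • ωc ∈ U ↔ (θ - ωc) - n • ωc ∈ U := by
          intro θ
          have h3 : θ - (n + 1 : ℕ) • ωc = (θ - ωc) - n • ωc := by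
            rw [succ_nsmul]; abel
          rw [h3]
        have hmaps1 : MapsTo (fun θ : UnitAddCircle => θ - ωc)
            {θ | θ - (n + 1 : ℕ) • ωc ∈ U} {θ | θ - n • ωc ∈ U} := by
          intro θ hθ
          exact (hVeq θ).mp hθ
        have hs : ContinuousOn (fun θ : UnitAddCircle => (θ - ωc, η (θ - ωc)))
            {θ | θ - (n + 1 : ℕ) • ωc ∈ U} := by
          refine ContinuousOn.prodMk ?_ ?_
          · exact (continuous_id.sub continuous_const).continuousOn
          · exact hηc.comp (continuous_id.sub continuous_const).continuousOn hmaps1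
        have hmaps2 : MapsTo (fun θ : UnitAddCircle => (θ - ωc, η (θ - ωc)))
            {θ | θ - (n + 1 : ℕ) • ωc ∈ U} (univ ×ˢ Icc a b) := by
          intro θ hθ
          exact hPCsub (hηPC (θ - ωc) (hmaps1 hθ))
        exact hf.comp hs hmaps2
      · intro θ hθ
        have hθ' : (θ - ωc) - n • ωc ∈ U := by
          have h3 : θ - (n + 1 : ℕ) • ωc = (θ - ωc) - n • ωc := by
            rw [succ_nsmul]; abel
          rw [h3] at hθ
          exact hθ
        have hmem : (θ - ωc, η (θ - ωc)) ∈ PC := hηPC (θ - ωc) hθ'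
        have := hinv ⟨(θ - ωc, η (θ - ωc)), hmem, rfl⟩
        simpa [skewProd, ← hωc, sub_add_cancel] using this
  choose η hηc hηPC using hiter
  have hVopen : ∀ n : ℕ, IsOpen {θ : UnitAddCircle | θ - n • ωc ∈ U} :=
    fun n => hUopen.preimage (continuous_id.sub continuous_const)
  -- the translates of U cover the circle
  have hcover : ∀ θ : UnitAddCircle, ∃ n : ℕ, θ - n • ωc ∈ U := by
    have hd := aux_dense_nsmul (-ω) hω.neg
    intro θ
    have hopen : IsOpen ((fun x : UnitAddCircle => θ + x) ⁻¹' U) :=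
      hUopen.preimage (continuous_const.add continuous_id)
    have hne : ((fun x : UnitAddCircle => θ + x) ⁻¹' U).Nonempty := by
      obtain ⟨u, hu⟩ := hUne
      exact ⟨u - θ, by simpa using hu⟩
    obtain ⟨n, hn⟩ := hd.exists_mem_open hopen hne
    refine ⟨n, ?_⟩
    have hcast : (((-ω : ℝ) : UnitAddCircle)) = -ωc := rfl
    rw [hcast, smul_neg] at hn
    simpa [sub_eq_add_neg] using hn
  -- define ψ
  set ψ : UnitAddCircle → ℝ := fun θ => η (hcover θ).choose θ with hψdef
  have hψPC : ∀ θ, (θ, ψ θ) ∈ PC := fun θ => hηPC _ θ (hcover θ).choose_spec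
  have huniq : ∀ θ : UnitAddCircle, ∀ x : ℝ, (θ, x) ∈ PC → x = ψ θ := by
    intro θ x hx
    exact harcUniq _ (η (hcover θ).choose) (hVopen _) (hηc _)
      (fun θ' hθ' => hηPC _ θ' hθ') θ (hcover θ).choose_spec x hx
  refine ⟨ψ, ?_, ?_, ?_⟩
  · rw [continuous_iff_continuousAt]
    intro θ
    obtain ⟨n, hn⟩ := hcover θ
    have hnhds : {θ' : UnitAddCircle | θ' - n • ωc ∈ U} ∈ 𝓝 θ :=
      (hVopen n).mem_nhds hn
    have hevEq : ψ =ᶠ[𝓝 θ] η n := by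
      filter_upwards [hnhds] with θ' hθ'
      exact (huniq θ' (η n θ') (hηPC n θ' hθ')).symm
    exact (((hηc n).continuousAt hnhds).congr hevEq.symm)
  · intro θ
    exact (hPCsub (hψPC θ)).2
  · ext p
    obtain ⟨θ, x⟩ := p
    constructor
    · intro hx
      exact ⟨θ, by rw [huniq θ x hx]⟩
    · rintro ⟨θ', hθ'⟩
      rw [← hθ']
      exact hψPC θ'
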